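/- arXiv:2603.06752 — 2 statements merged into one kernel-verified Lean document; each statement's English description precedes it below -/
import Mathlib

section
/- For any 0 < ε < 1, there exist a ReLU network Ẽ : ℝ^D → ℝ^n, a matrix Ã ∈ ℝ^{n×n} with spectral norm ‖Ã‖₂ ≤ ρ, and a ReLU network D̃ : ℝ^n → ℝ^D such that sup_{x∈M} ‖D̃(Ã Ẽ(x)) − F(x)‖_∞ ≤ ε. -/
noncomputable section

/-- Euclidean (ℓ²) norm of a vector in `ℝ^d`. -/
def l2 {d : ℕ} (x : Fin d → ℝ) : ℝ := Real.sqrt (∑ i, (x i) ^ 2)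

/-- Spectral norm (operator norm induced by Euclidean norms) of a square matrix. -/
def specNorm {n : ℕ} (A : Matrix (Fin n) (Fin n) ℝ) : ℝ :=
  ⨆ v : {v : Fin n → ℝ // l2 v ≤ 1}, l2 (A.mulVec v)

/-- Entrywise ReLU activation. -/
def reluVec {d : ℕ} (x : Fin d → ℝ) : Fin d → ℝ := fun i => max (x i) 0

/-- A feedforward ReLU neural network with input dimension `d₁` and output dimension `d₂`:
a list of affine layers, with the ReLU activation applied after every layer but the last,
computing `x ↦ W_L σ(W_{L−1} ⋯ σ(W_1 x + b_1) ⋯ + b_{L−1}) + b_L`. -/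
inductive ReluNet : ℕ → ℕ → Type
  | last {d₁ d₂ : ℕ} (W : Matrix (Fin d₂) (Fin d₁) ℝ) (b : Fin d₂ → ℝ) : ReluNet d₁ d₂
  | cons {d₁ d d₂ : ℕ} (W : Matrix (Fin d) (Fin d₁) ℝ) (b : Fin d → ℝ)
      (tail : ReluNet d d₂) : ReluNet d₁ d₂

/-- The function computed by a ReLU network. -/
def ReluNet.eval : {d₁ d₂ : ℕ} → ReluNet d₁ d₂ → (Fin d₁ → ℝ) → Fin d₂ → ℝ
  | _, _, last W b, x => W.mulVec x + b
  | _, _, cons W b t, x => t.eval (reluVec (W.mulVec x + b))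

namespace NNAux

section blocks
variable {a b c : ℕ}
def rowBlock (M₁ : Matrix (Fin a) (Fin c) ℝ) (M₂ : Matrix (Fin b) (Fin c) ℝ) :
    Matrix (Fin (a+b)) (Fin c) ℝ :=
  Matrix.of fun i j => Fin.addCases (fun i₁ => M₁ i₁ j) (fun i₂ => M₂ i₂ j) i
def colBlock (M₁ : Matrix (Fin c) (Fin a) ℝ) (M₂ : Matrix (Fin c) (Fin b) ℝ) :
    Matrix (Fin c) (Fin (a+b)) ℝ :=
  Matrix.of fun i j => Fin.addCases (M₁ i) (M₂ i) j
def cst (r : ℝ) : Matrix (Fin a) (Fin b) ℝ := Matrix.of fun _ _ => r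
lemma rowBlock_mulVec (M₁ : Matrix (Fin a) (Fin c) ℝ) (M₂ : Matrix (Fin b) (Fin c) ℝ)
    (v : Fin c → ℝ) :
    (rowBlock M₁ M₂).mulVec v = Fin.append (M₁.mulVec v) (M₂.mulVec v) := by
  funext i
  refine Fin.addCases (fun i₁ => ?_) (fun i₂ => ?_) i <;>
    simp [rowBlock, Matrix.mulVec, dotProduct, Fin.append_left, Fin.append_right]
lemma colBlock_mulVec (M₁ : Matrix (Fin c) (Fin a) ℝ) (M₂ : Matrix (Fin c) (Fin b) ℝ)
    (u : Fin a → ℝ) (v : Fin b → ℝ) :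
    (colBlock M₁ M₂).mulVec (Fin.append u v) = M₁.mulVec u + M₂.mulVec v := by
  funext i
  simp [colBlock, Matrix.mulVec, dotProduct, Fin.sum_univ_add, Fin.append_left,
    Fin.append_right]
lemma cst_mulVec (r : ℝ) (v : Fin b → ℝ) :
    (cst r : Matrix (Fin a) (Fin b) ℝ).mulVec v = fun _ => r * ∑ j, v j := by
  funext i
  simp [cst, Matrix.mulVec, dotProduct, Finset.mul_sum]
lemma append_add (u u' : Fin a → ℝ) (v v' : Fin b → ℝ) :
    Fin.append u v + Fin.append u' v' = Fin.append (u + u') (v + v') := by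
  funext i
  refine Fin.addCases (fun i₁ => ?_) (fun i₂ => ?_) i <;>
    simp [Fin.append_left, Fin.append_right]
lemma reluVec_append (u : Fin a → ℝ) (v : Fin b → ℝ) :
    reluVec (Fin.append u v) = Fin.append (reluVec u) (reluVec v) := by
  funext i
  refine Fin.addCases (fun i₁ => ?_) (fun i₂ => ?_) i <;>
    simp [reluVec, Fin.append_left, Fin.append_right]
lemma reluVec_of_nonneg {u : Fin a → ℝ} (h : ∀ i, 0 ≤ u i) : reluVec u = u := by
  funext i; exact max_eq_left (h i)
lemma reluVec_nonneg (u : Fin a → ℝ) (i : Fin a) : 0 ≤ reluVec u i := le_max_right _ _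
lemma relu_add_relu_neg (t : ℝ) : max t 0 + max (-t) 0 = |t| := by
  rcases le_total t 0 with h | h
  · rw [max_eq_right h, max_eq_left (by linarith), abs_of_nonpos h]; ring
  · rw [max_eq_left h, max_eq_right (by linarith), abs_of_nonneg h]; ring
end blocks

lemma foldr_max_comm {α : Type*} (g : α → ℝ) (l : List α) (w m : ℝ) :
    l.foldr (fun p acc => max (g p) acc) (max w m) =
      max w (l.foldr (fun p acc => max (g p) acc) m) := by
  induction l with
  | nil => simp
  | cons p' l' ih' => simp only [List.foldr_cons, ih', max_left_comm]

section net
variable (d e : ℕ) (f : (Fin d → ℝ) → Fin e → ℝ) (L C R : ℝ)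

def Ymat : Matrix (Fin d) (Fin (d + e + e)) ℝ := colBlock (colBlock 1 0) 0
def Smat : Matrix (Fin e) (Fin (d + e + e)) ℝ := colBlock (colBlock 0 1) 1

variable {d e}

lemma Ymat_mulVec (y : Fin d → ℝ) (u v : Fin e → ℝ) :
    (Ymat d e).mulVec (Fin.append (Fin.append y u) v) = y := by
  simp [Ymat, colBlock_mulVec, Matrix.one_mulVec, Matrix.zero_mulVec]

lemma Smat_mulVec (y : Fin d → ℝ) (u v : Fin e → ℝ) :
    (Smat d e).mulVec (Fin.append (Fin.append y u) v) = u + v := by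
  simp [Smat, colBlock_mulVec, Matrix.one_mulVec, Matrix.zero_mulVec]

variable (d e)

def W1 : Matrix (Fin (d + e + e + d + d)) (Fin (d + e + e)) ℝ :=
  rowBlock (rowBlock 1 (Ymat d e)) (-(Ymat d e))

def bb1 (q : Fin d → ℝ) : Fin (d + e + e + d + d) → ℝ :=
  Fin.append (Fin.append 0 (-q)) q

def W2 : Matrix (Fin (d + e + e)) (Fin (d + e + e + d + d)) ℝ :=
  rowBlock (rowBlock (colBlock (colBlock (Ymat d e) 0) 0)
                     (colBlock (colBlock (Smat d e) 0) 0))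
           (colBlock (colBlock (-(Smat d e)) (cst (-L))) (cst (-L)))

def bb2 (p : Fin d → ℝ) : Fin (d + e + e) → ℝ :=
  Fin.append (Fin.append 0 0) (fun k => f p k + C)

def tailNet : List (Fin d → ℝ) → ReluNet (d + e + e) e
  | [] => .last (Smat d e) (fun _ => -C)
  | p :: l => .cons (W1 d e) (bb1 d e (fun i => p i + R))
      (.cons (W2 d e L) (bb2 d e f C p) (tailNet l))

variable {d e}

/-- value of one sample term -/
def sv (y p : Fin d → ℝ) (k : Fin e) : ℝ := f p k + C - L * ∑ i, |y i - (p i + R)|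

lemma tailNet_eval (l : List (Fin d → ℝ)) (y : Fin d → ℝ) (u v : Fin e → ℝ)
    (hy : ∀ i, 0 ≤ y i) (hu : ∀ k, 0 ≤ u k) (hv : ∀ k, 0 ≤ v k) :
    (tailNet d e f L C R l).eval (Fin.append (Fin.append y u) v) =
      fun k => (l.foldr (fun p m => max (sv f L C R y p k) m) (u k + v k)) - C := by
  induction l generalizing u v with
  | nil =>
      funext k
      simp [tailNet, ReluNet.eval, Smat_mulVec, sub_eq_add_neg]
  | cons p l ih =>
      set Z : Fin (d + e + e) → ℝ := Fin.append (Fin.append y u) v with hZ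
      have hZnn : ∀ i, 0 ≤ Z i := by
        intro i
        rw [hZ]
        refine Fin.addCases (fun i₁ => ?_) (fun i₂ => ?_) i
        · rw [Fin.append_left]
          refine Fin.addCases (fun j => ?_) (fun j => ?_) i₁
          · rw [Fin.append_left]; exact hy j
          · rw [Fin.append_right]; exact hu j
        · rw [Fin.append_right]; exact hv i₂
      set t1 : Fin d → ℝ := reluVec (fun i => y i - (p i + R)) with ht1
      set t2 : Fin d → ℝ := reluVec (fun i => (p i + R) - y i) with ht2
      -- layer 1
      have h1 : reluVec ((W1 d e).mulVec Z + bb1 d e (fun i => p i + R)) =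
          Fin.append (Fin.append Z t1) t2 := by
        rw [W1, rowBlock_mulVec, rowBlock_mulVec, bb1, append_add, append_add]
        have hA : (1 : Matrix (Fin (d + e + e)) (Fin (d + e + e)) ℝ).mulVec Z + 0 = Z := by
          rw [Matrix.one_mulVec, add_zero]
        have hB : (Ymat d e).mulVec Z + (-(fun i => p i + R)) = fun i => y i - (p i + R) := by
          rw [hZ, Ymat_mulVec]
          funext i
          simp [sub_eq_add_neg]
        have hC : (-(Ymat d e)).mulVec Z + (fun i => p i + R) = fun i => (p i + R) - y i := by
          rw [Matrix.neg_mulVec, hZ, Ymat_mulVec]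
          funext i
          simp only [Pi.add_apply, Pi.neg_apply]
          ring
        rw [hA, hB, hC, reluVec_append, reluVec_append, reluVec_of_nonneg hZnn, ← ht1, ← ht2]
      have hstep : (tailNet d e f L C R (p :: l)) = .cons (W1 d e) (bb1 d e (fun i => p i + R))
        (.cons (W2 d e L) (bb2 d e f C p) (tailNet d e f L C R l)) := rfl
      rw [hstep, ReluNet.eval, h1, ReluNet.eval]
      -- layer 2
      have h2 : (W2 d e L).mulVec (Fin.append (Fin.append Z t1) t2) + bb2 d e f C p =
          Fin.append (Fin.append y (u + v))
            (fun k => f p k + C - L * (∑ i, (t1 i + t2 i)) - (u k + v k)) := by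
        rw [W2, rowBlock_mulVec, rowBlock_mulVec, bb2, append_add, append_add]
        have hA : (colBlock (colBlock (Ymat d e) 0) 0).mulVec (Fin.append (Fin.append Z t1) t2)
            + 0 = y := by
          rw [colBlock_mulVec, colBlock_mulVec, hZ]
          simp [Matrix.zero_mulVec, Ymat_mulVec]
        have hB : (colBlock (colBlock (Smat d e) 0) 0).mulVec (Fin.append (Fin.append Z t1) t2)
            + 0 = u + v := by
          rw [colBlock_mulVec, colBlock_mulVec, hZ]
          simp [Matrix.zero_mulVec, Smat_mulVec]
        have hC : (colBlock (colBlock (-(Smat d e)) (cst (-L))) (cst (-L))).mulVec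
              (Fin.append (Fin.append Z t1) t2) + (fun k => f p k + C) =
            fun k => f p k + C - L * (∑ i, (t1 i + t2 i)) - (u k + v k) := by
          rw [colBlock_mulVec, colBlock_mulVec, Matrix.neg_mulVec, hZ, Smat_mulVec,
            cst_mulVec, cst_mulVec]
          funext k
          simp only [Pi.add_apply, Pi.neg_apply]
          rw [Finset.sum_add_distrib]
          ring
        rw [hA, hB, hC]
      rw [h2, reluVec_append, reluVec_append, reluVec_of_nonneg hy,
        reluVec_of_nonneg (u := u + v) (fun k => add_nonneg (hu k) (hv k))]
      rw [ih (u + v) (reluVec fun k => f p k + C - L * (∑ i, (t1 i + t2 i)) - (u k + v k))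
        (fun k => add_nonneg (hu k) (hv k)) (fun k => reluVec_nonneg _ k)]
      funext k
      simp only [List.foldr_cons]
      congr 1
      have hsum : ∑ i, (t1 i + t2 i) = ∑ i, |y i - (p i + R)| := by
        refine Finset.sum_congr rfl fun i _ => ?_
        rw [ht1, ht2]
        simpa [reluVec] using relu_add_relu_neg (y i - (p i + R))
      have hmax : (u + v) k + reluVec (fun k => f p k + C - L * (∑ i, (t1 i + t2 i))
            - (u k + v k)) k = max (sv f L C R y p k) (u k + v k) := by
        simp only [reluVec, Pi.add_apply, sv, hsum]
        rcases le_total (f p k + C - L * (∑ i, |y i - (p i + R)|)) (u k + v k) with h | h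
        · rw [max_eq_right (by linarith), max_eq_right h]; ring
        · rw [max_eq_left (by linarith), max_eq_left h]; ring
      rw [hmax, foldr_max_comm]

end net

section core
variable {d e : ℕ}

lemma le_foldr_max_of_mem {α : Type*} {g : α → ℝ} (m : ℝ) {l : List α} {p : α}
    (hp : p ∈ l) : g p ≤ l.foldr (fun p acc => max (g p) acc) m := by
  induction l with
  | nil => exact absurd hp List.not_mem_nil
  | cons q l ih =>
      rcases List.mem_cons.mp hp with h | h
      · subst h; exact le_max_left _ _
      · exact (ih h).trans (le_max_right _ _)

lemma foldr_max_le {α : Type*} {g : α → ℝ} {m v : ℝ} {l : List α}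
    (h : ∀ p ∈ l, g p ≤ v) (hm : m ≤ v) :
    l.foldr (fun p acc => max (g p) acc) m ≤ v := by
  induction l with
  | nil => exact hm
  | cons q l ih =>
      refine max_le (h q List.mem_cons_self) (ih fun p hp => h p (List.mem_cons_of_mem q hp))

def apxNet (d e : ℕ) (f : (Fin d → ℝ) → Fin e → ℝ) (L C R : ℝ)
    (l : List (Fin d → ℝ)) : ReluNet d e :=
  .cons (rowBlock (rowBlock (1 : Matrix (Fin d) (Fin d) ℝ) (0 : Matrix (Fin e) (Fin d) ℝ))
      (0 : Matrix (Fin e) (Fin d) ℝ))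
    (Fin.append (Fin.append (fun _ => R) 0) 0)
    (tailNet d e f L C R l)

lemma apxNet_eval (f : (Fin d → ℝ) → Fin e → ℝ) (L C R : ℝ) (l : List (Fin d → ℝ))
    (x : Fin d → ℝ) (hx : ∀ i, 0 ≤ x i + R) :
    (apxNet d e f L C R l).eval x =
      fun k => (l.foldr (fun p m => max (f p k + C - L * ∑ i, |x i - p i|) m) 0) - C := by
  rw [apxNet, ReluNet.eval]
  have h0 : reluVec ((rowBlock (rowBlock (1 : Matrix (Fin d) (Fin d) ℝ)
        (0 : Matrix (Fin e) (Fin d) ℝ)) (0 : Matrix (Fin e) (Fin d) ℝ)).mulVec x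
          + Fin.append (Fin.append (fun _ => R) 0) 0)
      = Fin.append (Fin.append (fun i => x i + R) (0 : Fin e → ℝ)) (0 : Fin e → ℝ) := by
    rw [rowBlock_mulVec, rowBlock_mulVec, append_add, append_add]
    have e1 : (1 : Matrix (Fin d) (Fin d) ℝ).mulVec x + (fun _ => R) = fun i => x i + R := by
      rw [Matrix.one_mulVec]; rfl
    have e2 : (0 : Matrix (Fin e) (Fin d) ℝ).mulVec x + (0 : Fin e → ℝ) = 0 := by
      rw [Matrix.zero_mulVec, add_zero]
    rw [e1, e2, reluVec_append, reluVec_append,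
      reluVec_of_nonneg (u := fun i => x i + R) hx,
      reluVec_of_nonneg (u := (0 : Fin e → ℝ)) (fun _ => le_rfl)]
  rw [h0, tailNet_eval f L C R l (fun i => x i + R) 0 0 hx (fun _ => le_rfl) (fun _ => le_rfl)]
  funext k
  have : ∀ p : Fin d → ℝ, sv f L C R (fun i => x i + R) p k
      = f p k + C - L * ∑ i, |x i - p i| := by
    intro p
    rw [sv]
    congr 2
    refine Finset.sum_congr rfl fun i _ => ?_
    congr 1
    ring
  have hfold : ∀ m : ℝ, l.foldr (fun p m => max (sv f L C R (fun i => x i + R) p k) m) m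
      = l.foldr (fun p m => max (f p k + C - L * ∑ i, |x i - p i|) m) m := by
    intro m
    induction l with
    | nil => rfl
    | cons q l' ih => simp only [List.foldr_cons, ih, this q]
  simp only [Pi.zero_apply, add_zero, hfold]

lemma core_approx (d e : ℕ) (f : (Fin d → ℝ) → Fin e → ℝ) (L ε : ℝ) (hL : 0 ≤ L)
    (hε : 0 < ε) (hf : ∀ x y : Fin d → ℝ, ∀ k, |f x k - f y k| ≤ L * ∑ i, |x i - y i|)
    (K : Set (Fin d → ℝ)) (hK : IsCompact K) :
    ∃ N : ReluNet d e, ∀ x ∈ K, ∀ k, |N.eval x k - f x k| ≤ ε := by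
  obtain ⟨r, hr⟩ := hK.isBounded.subset_closedBall 0
  set R := max r 0 with hR
  set δ := ε / (2 * (L * d + 1)) with hδdef
  have hLd : (0:ℝ) ≤ L * d := mul_nonneg hL (Nat.cast_nonneg d)
  have hδpos : 0 < δ := div_pos hε (by positivity)
  obtain ⟨t, htfin, htcov⟩ := (Metric.totallyBounded_iff.mp hK.totallyBounded) δ hδpos
  set l := htfin.toFinset.toList with hl
  have hmem : ∀ p, p ∈ l ↔ p ∈ t := by
    intro p
    rw [hl, Finset.mem_toList, Set.Finite.mem_toFinset]
  set C0 := l.foldr (fun p m => max (∑ k, |f p k|) m) 0 with hC0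
  set C := C0 + L * d * δ with hC
  refine ⟨apxNet d e f L C R l, ?_⟩
  intro x hx k
  have hxR : ∀ i, 0 ≤ x i + R := by
    intro i
    have h1 : dist x 0 ≤ r := Metric.mem_closedBall.mp (hr hx)
    have h2 : |x i| ≤ r := by
      have h3 := dist_le_pi_dist x 0 i
      simp only [Pi.zero_apply, Real.dist_eq, sub_zero] at h3
      exact h3.trans h1
    have h4 : -r ≤ x i := (abs_le.mp h2).1
    have h5 : r ≤ R := le_max_left r 0
    linarith
  simp only [apxNet_eval f L C R l x hxR]
  obtain ⟨p₀, hp₀t, hp₀⟩ : ∃ p₀ ∈ t, x ∈ Metric.ball p₀ δ := by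
    simpa using htcov hx
  have hp₀l : p₀ ∈ l := (hmem p₀).mpr hp₀t
  have hdist : ∑ i, |x i - p₀ i| ≤ d * δ := by
    have hi : ∀ i, |x i - p₀ i| ≤ δ := by
      intro i
      have h := dist_le_pi_dist x p₀ i
      have h' := (Metric.mem_ball.mp hp₀).le
      calc |x i - p₀ i| = dist (x i) (p₀ i) := (Real.dist_eq _ _).symm
        _ ≤ dist x p₀ := h
        _ ≤ δ := h'
    calc ∑ i, |x i - p₀ i| ≤ ∑ _i : Fin d, δ := Finset.sum_le_sum (fun i _ => hi i)
      _ = d * δ := by simp [Finset.sum_const, mul_comm]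
  have hsum_nonneg : (0:ℝ) ≤ ∑ i, |x i - p₀ i| := Finset.sum_nonneg fun i _ => abs_nonneg _
  have hC0b : |f p₀ k| ≤ C0 := by
    calc |f p₀ k| ≤ ∑ k', |f p₀ k'| :=
          Finset.single_le_sum (f := fun k' => |f p₀ k'|) (fun k' _ => abs_nonneg _) (Finset.mem_univ k)
      _ ≤ C0 := le_foldr_max_of_mem (g := fun p => ∑ k', |f p k'|) 0 hp₀l
  have hfx : |f x k| ≤ C := by
    have h1 : |f x k - f p₀ k| ≤ L * ∑ i, |x i - p₀ i| := hf x p₀ k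
    have h2 : L * ∑ i, |x i - p₀ i| ≤ L * (d * δ) := mul_le_mul_of_nonneg_left hdist hL
    have h3 : |f x k| ≤ |f p₀ k| + |f x k - f p₀ k| := by
      have := abs_add_le (f p₀ k) (f x k - f p₀ k)
      simpa using this
    rw [hC]
    have : L * (↑d * δ) = L * ↑d * δ := (mul_assoc _ _ _).symm
    linarith
  -- upper bound
  have hub : l.foldr (fun p m => max (f p k + C - L * ∑ i, |x i - p i|) m) 0 ≤ f x k + C := by
    refine foldr_max_le (fun p _ => ?_) (by have := (abs_le.mp hfx).1; linarith)
    have h1 : f p k - f x k ≤ L * ∑ i, |p i - x i| := (le_abs_self _).trans (hf p x k)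
    have h2 : ∑ i, |p i - x i| = ∑ i, |x i - p i| :=
      Finset.sum_congr rfl fun i _ => abs_sub_comm _ _
    rw [h2] at h1
    linarith
  -- lower bound
  have hlb : f p₀ k + C - L * ∑ i, |x i - p₀ i|
      ≤ l.foldr (fun p m => max (f p k + C - L * ∑ i, |x i - p i|) m) 0 :=
    le_foldr_max_of_mem (g := fun p => f p k + C - L * ∑ i, |x i - p i|) 0 hp₀l
  have h2Ld : 2 * (L * ↑d) * δ ≤ ε := by
    have heq : 2 * (L * ↑d + 1) * δ = ε := by
      rw [hδdef]
      field_simp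
    nlinarith [hδpos.le]
  have hnear : f x k - f p₀ k ≤ L * ∑ i, |x i - p₀ i| := (le_abs_self _).trans (hf x p₀ k)
  have hLsum : L * ∑ i, |x i - p₀ i| ≤ L * (↑d * δ) := mul_le_mul_of_nonneg_left hdist hL
  refine abs_le.mpr ⟨?_, ?_⟩
  · have : f x k - (f p₀ k + C - L * ∑ i, |x i - p₀ i|) + C ≤ 2 * (L * ∑ i, |x i - p₀ i|) := by
      linarith
    have h6 : 2 * (L * ∑ i, |x i - p₀ i|) ≤ 2 * (L * (↑d * δ)) := by linarith
    have h7 : 2 * (L * (↑d * δ)) = 2 * (L * ↑d) * δ := by ring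
    linarith
  · linarith

end core

/-! l2 and specNorm facts -/

lemma l2_nonneg {d : ℕ} (u : Fin d → ℝ) : 0 ≤ l2 u := Real.sqrt_nonneg _

lemma abs_le_l2 {d : ℕ} (u : Fin d → ℝ) (k : Fin d) : |u k| ≤ l2 u := by
  rw [l2, ← Real.sqrt_sq_eq_abs]
  exact Real.sqrt_le_sqrt (Finset.single_le_sum (f := fun i => (u i) ^ 2)
    (fun i _ => sq_nonneg _) (Finset.mem_univ k))

lemma l2_le_sum_abs {d : ℕ} (u : Fin d → ℝ) : l2 u ≤ ∑ i, |u i| := by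
  rw [l2]
  have h1 : ∑ i, (u i) ^ 2 ≤ (∑ i, |u i|) ^ 2 := by
    have := Finset.sum_sq_le_sq_sum_of_nonneg (s := Finset.univ)
      (f := fun i : Fin d => |u i|) (fun i _ => abs_nonneg _)
    simpa [sq_abs] using this
  calc Real.sqrt (∑ i, (u i) ^ 2) ≤ Real.sqrt ((∑ i, |u i|) ^ 2) := Real.sqrt_le_sqrt h1
    _ = ∑ i, |u i| := Real.sqrt_sq (Finset.sum_nonneg fun i _ => abs_nonneg _)

lemma l2_smul {d : ℕ} (c : ℝ) (u : Fin d → ℝ) : l2 (c • u) = |c| * l2 u := by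
  rw [l2, l2]
  have : ∑ i, ((c • u) i) ^ 2 = c ^ 2 * ∑ i, (u i) ^ 2 := by
    rw [Finset.mul_sum]
    refine Finset.sum_congr rfl fun i _ => ?_
    simp [Pi.smul_apply, smul_eq_mul]
    ring
  rw [this, Real.sqrt_mul (sq_nonneg c), Real.sqrt_sq_eq_abs]

lemma l2_pos {d : ℕ} {u : Fin d → ℝ} (h : u ≠ 0) : 0 < l2 u := by
  obtain ⟨k, hk⟩ : ∃ k, u k ≠ 0 := by
    by_contra hc
    push_neg at hc
    exact h (funext hc)
  exact lt_of_lt_of_le (abs_pos.mpr hk) (abs_le_l2 u k)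

lemma specNorm_bddAbove {m : ℕ} (A : Matrix (Fin m) (Fin m) ℝ) :
    BddAbove (Set.range fun v : {v : Fin m → ℝ // l2 v ≤ 1} => l2 (A.mulVec v)) := by
  refine ⟨∑ i, ∑ j, |A i j|, ?_⟩
  rintro z ⟨⟨v, hv⟩, rfl⟩
  calc l2 (A.mulVec v) ≤ ∑ i, |A.mulVec v i| := l2_le_sum_abs _
    _ ≤ ∑ i, ∑ j, |A i j| := by
        refine Finset.sum_le_sum fun i _ => ?_
        calc |A.mulVec v i| = |∑ j, A i j * v j| := by rw [Matrix.mulVec, dotProduct]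
          _ ≤ ∑ j, |A i j * v j| := Finset.abs_sum_le_sum_abs _ _
          _ ≤ ∑ j, |A i j| := by
              refine Finset.sum_le_sum fun j _ => ?_
              rw [abs_mul]
              have hvj : |v j| ≤ 1 := (abs_le_l2 v j).trans hv
              nlinarith [abs_nonneg (A i j), abs_nonneg (v j)]

lemma l2_mulVec_le {m : ℕ} (A : Matrix (Fin m) (Fin m) ℝ) (w : Fin m → ℝ) :
    l2 (A.mulVec w) ≤ specNorm A * l2 w := by
  by_cases hw : w = 0
  · subst hw
    have h1 : A.mulVec 0 = 0 := Matrix.mulVec_zero A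
    have h2 : l2 (0 : Fin m → ℝ) = 0 := by simp [l2]
    rw [h1, h2, mul_zero]
  · have hpos : 0 < l2 w := l2_pos hw
    set v : Fin m → ℝ := (l2 w)⁻¹ • w with hv
    have hl2v : l2 v = 1 := by
      rw [hv, l2_smul, abs_of_pos (inv_pos.mpr hpos), inv_mul_cancel₀ hpos.ne']
    have hmem : l2 (A.mulVec v) ≤ specNorm A := by
      rw [specNorm]
      exact le_ciSup (specNorm_bddAbove A) (⟨v, hl2v.le⟩ : {v : Fin m → ℝ // l2 v ≤ 1})
    have hwv : w = l2 w • v := by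
      rw [hv, smul_smul, mul_inv_cancel₀ hpos.ne', one_smul]
    calc l2 (A.mulVec w) = l2 (A.mulVec (l2 w • v)) := by rw [← hwv]
      _ = l2 (l2 w • A.mulVec v) := by rw [Matrix.mulVec_smul]
      _ = l2 w * l2 (A.mulVec v) := by rw [l2_smul, abs_of_pos hpos]
      _ ≤ l2 w * specNorm A := mul_le_mul_of_nonneg_left hmem hpos.le
      _ = specNorm A * l2 w := mul_comm _ _

/-! Continuity of network evaluation -/

lemma eval_continuous : ∀ {d₁ d₂ : ℕ} (N : ReluNet d₁ d₂), Continuous fun x => N.eval x := by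
  intro d₁ d₂ N
  induction N with
  | last W b =>
      refine continuous_pi fun i => ?_
      simp only [ReluNet.eval]
      refine Continuous.add ?_ continuous_const
      simp only [Matrix.mulVec, dotProduct]
      exact continuous_finset_sum _ fun j _ => (continuous_const.mul (continuous_apply j))
  | cons W b t ih =>
      have h1 : Continuous fun x : Fin _ → ℝ => reluVec (W.mulVec x + b) := by
        refine continuous_pi fun i => ?_
        refine Continuous.max ?_ continuous_const
        refine Continuous.add ?_ continuous_const
        simp only [Matrix.mulVec, dotProduct]
        exact continuous_finset_sum _ fun j _ => (continuous_const.mul (continuous_apply j))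
      exact ih.comp h1

end NNAux

/-- for any `0 < ε < 1` there exist a ReLU network `Ẽ : ℝ^D → ℝ^n`, a matrix
`Ã ∈ ℝ^{n×n}` with spectral norm `‖Ã‖₂ ≤ ρ`, and a ReLU network `D̃ : ℝ^n → ℝ^D` such that
`sup_{x∈M} ‖D̃(Ã Ẽ(x)) − F(x)‖_∞ ≤ ε`.
Here `M ⊂ ℝ^D` is a compact set bounded by `B` in sup norm with a global bi-Lipschitz
parametrization `φ : M → [−Λ,Λ]^n`, `ψ` is a `C_φ`-Lipschitz extension of `φ⁻¹`,
`A*` has spectral norm at most `ρ ≤ 1` and satisfies `A* φ(M) ⊆ φ(M)`, and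
`F(x) = ψ(A* φ(x))`.  (`‖·‖` on `Fin d → ℝ` is the sup norm.) -/
theorem stmt2 {D n : ℕ} (M : Set (Fin D → ℝ)) (hMc : IsCompact M)
    (B Λ ρ Cφ : ℝ) (hρ0 : 0 < ρ) (hρ1 : ρ ≤ 1) (hCφ : 0 < Cφ)
    (hMB : ∀ x ∈ M, ‖x‖ ≤ B)
    (φ : (Fin D → ℝ) → (Fin n → ℝ)) (ψ : (Fin n → ℝ) → (Fin D → ℝ))
    (hφΛ : ∀ x ∈ M, ∀ i, |φ x i| ≤ Λ)
    (hφlow : ∀ v₁ ∈ M, ∀ v₂ ∈ M, Cφ⁻¹ * l2 (v₁ - v₂) ≤ l2 (φ v₁ - φ v₂))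
    (hφup : ∀ v₁ ∈ M, ∀ v₂ ∈ M, l2 (φ v₁ - φ v₂) ≤ Cφ * l2 (v₁ - v₂))
    (hψlip : ∀ u v : Fin n → ℝ, l2 (ψ u - ψ v) ≤ Cφ * l2 (u - v))
    (hψφ : ∀ x ∈ M, ψ (φ x) = x)
    (Astar : Matrix (Fin n) (Fin n) ℝ) (hA : specNorm Astar ≤ ρ)
    (hAM : ∀ x ∈ M, ∃ x' ∈ M, Astar.mulVec (φ x) = φ x')
    (F : (Fin D → ℝ) → (Fin D → ℝ)) (hF : ∀ x ∈ M, F x = ψ (Astar.mulVec (φ x)))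
    (ε : ℝ) (hε0 : 0 < ε) (hε1 : ε < 1) :
    ∃ (Enet : ReluNet D n) (Atil : Matrix (Fin n) (Fin n) ℝ) (Dnet : ReluNet n D),
      specNorm Atil ≤ ρ ∧
      ∀ x ∈ M, ‖Dnet.eval (Atil.mulVec (Enet.eval x)) - F x‖ ≤ ε := by
  classical
  have l2sub : ∀ (m : ℕ) (x y : Fin m → ℝ), l2 (x - y) ≤ ∑ i, |x i - y i| := by
    intro m x y
    simpa [Pi.sub_apply] using NNAux.l2_le_sum_abs (x - y)
  have habs : ∀ (m : ℕ) (x y : Fin m → ℝ) (k : Fin m), |x k - y k| ≤ l2 (x - y) := by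
    intro m x y k
    simpa [Pi.sub_apply] using NNAux.abs_le_l2 (x - y) k
  have hsum_le_dist : ∀ (m : ℕ) (x y : Fin m → ℝ), ∑ i, |x i - y i| ≤ m * dist x y := by
    intro m x y
    calc ∑ i, |x i - y i| ≤ ∑ _i : Fin m, dist x y := by
          refine Finset.sum_le_sum fun i _ => ?_
          rw [← Real.dist_eq]
          exact dist_le_pi_dist x y i
      _ = m * dist x y := by simp [Finset.sum_const, mul_comm]
  have hdist_le_sum : ∀ (m : ℕ) (x y : Fin m → ℝ), dist x y ≤ ∑ i, |x i - y i| := by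
    intro m x y
    refine (dist_pi_le_iff (Finset.sum_nonneg fun i _ => abs_nonneg _)).mpr fun i => ?_
    rw [Real.dist_eq]
    exact Finset.single_le_sum (f := fun i => |x i - y i|) (fun _ _ => abs_nonneg _)
      (Finset.mem_univ i)
  set K1 : NNReal := Real.toNNReal (Cφ * D) with hK1
  have hK1coe : (K1 : ℝ) = Cφ * D :=
    Real.coe_toNNReal _ (mul_nonneg hCφ.le (Nat.cast_nonneg D))
  have hφlipOn : ∀ k : Fin n, LipschitzOnWith K1 (fun x => φ x k) M := by
    intro k
    refine LipschitzOnWith.of_dist_le_mul fun x hx y hy => ?_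
    rw [Real.dist_eq, hK1coe]
    calc |φ x k - φ y k| ≤ l2 (φ x - φ y) := habs n (φ x) (φ y) k
      _ ≤ Cφ * l2 (x - y) := hφup x hx y hy
      _ ≤ Cφ * ∑ i, |x i - y i| := mul_le_mul_of_nonneg_left (l2sub D x y) hCφ.le
      _ ≤ Cφ * (D * dist x y) := mul_le_mul_of_nonneg_left (hsum_le_dist D x y) hCφ.le
      _ = Cφ * D * dist x y := by ring
  have hext : ∀ k : Fin n, ∃ g : (Fin D → ℝ) → ℝ,
      LipschitzWith K1 g ∧ Set.EqOn (fun x => φ x k) g M :=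
    fun k => (hφlipOn k).extend_real
  choose g hg1 hg2 using hext
  have hfφ_lip : ∀ x y : Fin D → ℝ, ∀ k : Fin n,
      |g k x - g k y| ≤ (Cφ * D) * ∑ i, |x i - y i| := by
    intro x y k
    have h1 := (hg1 k).dist_le_mul x y
    rw [Real.dist_eq, hK1coe] at h1
    calc |g k x - g k y| ≤ Cφ * D * dist x y := h1
      _ ≤ Cφ * D * ∑ i, |x i - y i| := by
          refine mul_le_mul_of_nonneg_left (hdist_le_sum D x y) ?_
          exact mul_nonneg hCφ.le (Nat.cast_nonneg D)
  set ε₁ := ε / (2 * (Cφ * n + 1)) with hε₁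
  have hCn : (0:ℝ) ≤ Cφ * n := mul_nonneg hCφ.le (Nat.cast_nonneg n)
  have hε₁pos : 0 < ε₁ := div_pos hε0 (by nlinarith)
  obtain ⟨Enet, hEnet⟩ := NNAux.core_approx D n (fun x k => g k x) (Cφ * D) ε₁
    (mul_nonneg hCφ.le (Nat.cast_nonneg D)) hε₁pos (fun x y k => hfφ_lip x y k) M hMc
  have hEφ : ∀ x ∈ M, ∀ k, |Enet.eval x k - φ x k| ≤ ε₁ := by
    intro x hx k
    have h1 := hEnet x hx k
    have h2 : φ x k = g k x := hg2 k hx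
    rwa [← h2] at h1
  have hψ_lip : ∀ u v : Fin n → ℝ, ∀ k : Fin D, |ψ u k - ψ v k| ≤ Cφ * ∑ i, |u i - v i| := by
    intro u v k
    calc |ψ u k - ψ v k| ≤ l2 (ψ u - ψ v) := habs D (ψ u) (ψ v) k
      _ ≤ Cφ * l2 (u - v) := hψlip u v
      _ ≤ Cφ * ∑ i, |u i - v i| := mul_le_mul_of_nonneg_left (l2sub n u v) hCφ.le
  set T : (Fin D → ℝ) → (Fin n → ℝ) := fun x => Astar.mulVec (Enet.eval x) with hT
  have hTc : Continuous T := by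
    have hmv : Continuous fun v : Fin n → ℝ => Astar.mulVec v := by
      refine continuous_pi fun i => ?_
      simp only [Matrix.mulVec, dotProduct]
      exact continuous_finset_sum _ fun j _ => (continuous_const.mul (continuous_apply j))
    exact hmv.comp (NNAux.eval_continuous Enet)
  have hK2 : IsCompact (T '' M) := hMc.image hTc
  obtain ⟨Dnet, hDnet⟩ := NNAux.core_approx n D (fun u k => ψ u k) Cφ (ε/2) hCφ.le
    (half_pos hε0) (fun u v k => hψ_lip u v k) (T '' M) hK2
  refine ⟨Enet, Astar, Dnet, hA, ?_⟩
  intro x hx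
  have hxim : T x ∈ T '' M := Set.mem_image_of_mem T hx
  rw [hF x hx]
  refine (pi_norm_le_iff_of_nonneg hε0.le).mpr fun k => ?_
  rw [Pi.sub_apply, Real.norm_eq_abs]
  have h1 : |Dnet.eval (T x) k - ψ (T x) k| ≤ ε/2 := hDnet (T x) hxim k
  have hl2diff : l2 (Enet.eval x - φ x) ≤ n * ε₁ := by
    calc l2 (Enet.eval x - φ x) ≤ ∑ i, |Enet.eval x i - φ x i| := l2sub n _ _
      _ ≤ ∑ _i : Fin n, ε₁ := Finset.sum_le_sum fun i _ => hEφ x hx i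
      _ = n * ε₁ := by simp [Finset.sum_const, mul_comm]
  have h2 : |ψ (T x) k - ψ (Astar.mulVec (φ x)) k| ≤ Cφ * (n * ε₁) := by
    have ha : T x - Astar.mulVec (φ x) = Astar.mulVec (Enet.eval x - φ x) := by
      rw [hT]
      exact (Matrix.mulVec_sub Astar _ _).symm
    calc |ψ (T x) k - ψ (Astar.mulVec (φ x)) k|
        ≤ l2 (ψ (T x) - ψ (Astar.mulVec (φ x))) := habs D _ _ k
      _ ≤ Cφ * l2 (T x - Astar.mulVec (φ x)) := hψlip _ _
      _ = Cφ * l2 (Astar.mulVec (Enet.eval x - φ x)) := by rw [ha]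
      _ ≤ Cφ * (specNorm Astar * l2 (Enet.eval x - φ x)) :=
          mul_le_mul_of_nonneg_left (NNAux.l2_mulVec_le _ _) hCφ.le
      _ ≤ Cφ * (1 * (n * ε₁)) := by
          refine mul_le_mul_of_nonneg_left ?_ hCφ.le
          exact mul_le_mul (hA.trans hρ1) hl2diff (NNAux.l2_nonneg _) zero_le_one
      _ = Cφ * (n * ε₁) := by ring
  have hfinal : Cφ * (↑n * ε₁) ≤ ε / 2 := by
    rw [hε₁]
    rw [show Cφ * (↑n * (ε / (2 * (Cφ * ↑n + 1)))) = (Cφ * ↑n) * ε / (2 * (Cφ * ↑n + 1)) by ring]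
    rw [div_le_div_iff₀ (by nlinarith) (by norm_num)]
    nlinarith
  calc |Dnet.eval (T x) k - ψ (Astar.mulVec (φ x)) k|
      ≤ |Dnet.eval (T x) k - ψ (T x) k| + |ψ (T x) k - ψ (Astar.mulVec (φ x)) k| :=
        abs_sub_le _ _ _
    _ ≤ ε/2 + ε/2 := add_le_add h1 (h2.trans hfinal)
    _ = ε := add_halves ε

end
end

section
/- Let M ⊂ ℝ^D be a nonempty set. Let E₁, E₂ : M → ℝ^n be bounded maps with sup_{x∈M} ‖E₂(x)‖_∞ ≤ Λ; let A₁, A₂ ∈ ℝ^{n×n} with spectral norm ‖A₁‖₂ ≤ ρ; and let D₁, D₂ : ℝ^n → ℝ^D be maps such that D₂ satisfies ‖D₂(u) − D₂(v)‖_∞ ≤ C ‖u − v‖₂ for all u, v ∈ ℝ^n. Then sup_{x∈M} ‖D₁(A₁ E₁(x)) − D₂(A₂ E₂(x))‖_∞ ≤ sup_{z∈ℝ^n} ‖D₁(z) − D₂(z)‖_∞ + C ρ √n · sup_{x∈M} ‖E₁(x) − E₂(x)‖_∞ + C n^{3/2} Λ · max_{1≤i,j≤n} |(A₁ − A₂)_{ij}|.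 -/
noncomputable section

lemma l2_nonneg {d : ℕ} (x : Fin d → ℝ) : 0 ≤ l2 x := Real.sqrt_nonneg _

lemma l2_eq_norm {d : ℕ} (x : Fin d → ℝ) :
    l2 x = ‖(WithLp.equiv 2 (Fin d → ℝ)).symm x‖ := by
  rw [EuclideanSpace.norm_eq]
  simp [l2, sq_abs]

lemma l2_add_le {d : ℕ} (x y : Fin d → ℝ) : l2 (x + y) ≤ l2 x + l2 y := by
  simp only [l2_eq_norm]
  exact norm_add_le ((WithLp.equiv 2 (Fin d → ℝ)).symm x) ((WithLp.equiv 2 (Fin d → ℝ)).symm y)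

lemma l2_smul {d : ℕ} (c : ℝ) (x : Fin d → ℝ) : l2 (c • x) = |c| * l2 x := by
  simp only [l2_eq_norm]
  rw [show (WithLp.equiv 2 (Fin d → ℝ)).symm (c • x)
      = c • (WithLp.equiv 2 (Fin d → ℝ)).symm x from rfl]
  rw [norm_smul]; simp

lemma l2_le {d : ℕ} (x : Fin d → ℝ) {B : ℝ} (hB : 0 ≤ B)
    (h : ∑ i, x i ^ 2 ≤ B ^ 2) : l2 x ≤ B := by
  have := Real.sqrt_le_sqrt h
  rwa [Real.sqrt_sq hB] at this

lemma l2_le_sqrt_mul_norm {d : ℕ} (x : Fin d → ℝ) : l2 x ≤ Real.sqrt d * ‖x‖ := by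
  refine l2_le x (by positivity) ?_
  rw [mul_pow, Real.sq_sqrt (by positivity)]
  calc ∑ i, x i ^ 2 ≤ ∑ _i : Fin d, ‖x‖ ^ 2 := by
        refine Finset.sum_le_sum fun i _ => ?_
        rw [← sq_abs]
        exact pow_le_pow_left₀ (abs_nonneg _) (norm_le_pi_norm x i) 2
    _ = d * ‖x‖ ^ 2 := by simp [mul_comm]

lemma l2_mulVec_le_frob {n : ℕ} (A : Matrix (Fin n) (Fin n) ℝ) (v : Fin n → ℝ) :
    l2 (A.mulVec v) ≤ Real.sqrt (∑ i, ∑ j, A i j ^ 2) * l2 v := by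
  refine l2_le _ (mul_nonneg (Real.sqrt_nonneg _) (l2_nonneg v)) ?_
  rw [mul_pow, Real.sq_sqrt (by positivity : (0:ℝ) ≤ ∑ i, ∑ j, A i j ^ 2),
    show l2 v ^ 2 = ∑ i, v i ^ 2 from Real.sq_sqrt (by positivity)]
  rw [Finset.sum_mul]
  refine Finset.sum_le_sum fun i _ => ?_
  calc (A.mulVec v i) ^ 2 = (∑ j, A i j * v j) ^ 2 := by
        simp [Matrix.mulVec, dotProduct]
    _ ≤ (∑ j, A i j ^ 2) * ∑ j, v j ^ 2 := Finset.sum_mul_sq_le_sq_mul_sq _ _ _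

lemma bddAbove_spec {n : ℕ} (A : Matrix (Fin n) (Fin n) ℝ) :
    BddAbove (Set.range fun v : {v : Fin n → ℝ // l2 v ≤ 1} => l2 (A.mulVec v)) := by
  refine ⟨Real.sqrt (∑ i, ∑ j, A i j ^ 2), ?_⟩
  rintro _ ⟨⟨v, hv⟩, rfl⟩
  calc l2 (A.mulVec v) ≤ Real.sqrt (∑ i, ∑ j, A i j ^ 2) * l2 v := l2_mulVec_le_frob A v
    _ ≤ Real.sqrt (∑ i, ∑ j, A i j ^ 2) * 1 :=
        mul_le_mul_of_nonneg_left hv (Real.sqrt_nonneg _)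
    _ = _ := mul_one _

lemma l2_eq_zero {d : ℕ} {x : Fin d → ℝ} (h : l2 x = 0) : x = 0 := by
  have hs : ∑ i, x i ^ 2 = 0 := by
    have h2 := Real.sqrt_eq_zero'.mp h
    have h3 : (0:ℝ) ≤ ∑ i, x i ^ 2 := by positivity
    unfold l2 at h2
    linarith
  funext i
  have := (Finset.sum_eq_zero_iff_of_nonneg (fun i _ => sq_nonneg (x i))).mp hs i
    (Finset.mem_univ i)
  exact pow_eq_zero_iff (two_ne_zero) |>.mp this

lemma l2_mulVec_le_spec {n : ℕ} (A : Matrix (Fin n) (Fin n) ℝ) (w : Fin n → ℝ) :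
    l2 (A.mulVec w) ≤ specNorm A * l2 w := by
  rcases eq_or_lt_of_le (l2_nonneg w) with h0 | hpos
  · rw [l2_eq_zero h0.symm]
    simp [Matrix.mulVec_zero, l2, ← h0]
  · set c := l2 w with hc
    have hv1 : l2 (c⁻¹ • w) ≤ 1 := by
      rw [l2_smul, abs_of_nonneg (inv_nonneg.mpr hpos.le), inv_mul_cancel₀ hpos.ne']
    have hle : l2 (A.mulVec (c⁻¹ • w)) ≤ specNorm A :=
      le_ciSup (bddAbove_spec A) (⟨c⁻¹ • w, hv1⟩ : {v : Fin n → ℝ // l2 v ≤ 1})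
    rw [Matrix.mulVec_smul, l2_smul, abs_of_nonneg (inv_nonneg.mpr hpos.le)] at hle
    calc l2 (A.mulVec w) = c * (c⁻¹ * l2 (A.mulVec w)) := by
          field_simp
      _ ≤ c * specNorm A := mul_le_mul_of_nonneg_left hle hpos.le
      _ = specNorm A * c := mul_comm _ _

/-- a perturbation bound for composites `x ↦ D(A E(x))`.
The suprema on the right-hand side of the informal statement are expressed via
arbitrary finite upper bounds `δD, δE, δA` of the corresponding quantities; the
conclusion bounds the composite difference uniformly on `M` by
`δD + C ρ √n δE + C n^{3/2} Λ δA`.  (`‖·‖` on `Fin d → ℝ` is the sup norm.) -/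
theorem stmt5 {D n : ℕ} (M : Set (Fin D → ℝ)) (hM : M.Nonempty)
    (E₁ E₂ : (Fin D → ℝ) → (Fin n → ℝ))
    (hE₁bdd : ∃ c : ℝ, ∀ x ∈ M, ‖E₁ x‖ ≤ c)
    (Λ : ℝ) (hΛ : 0 ≤ Λ) (hE₂ : ∀ x ∈ M, ‖E₂ x‖ ≤ Λ)
    (A₁ A₂ : Matrix (Fin n) (Fin n) ℝ) (ρ : ℝ) (hρ : 0 ≤ ρ) (hA₁ : specNorm A₁ ≤ ρ)
    (D₁ D₂ : (Fin n → ℝ) → (Fin D → ℝ)) (C : ℝ) (hC : 0 ≤ C)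
    (hD₂ : ∀ u v : Fin n → ℝ, ‖D₂ u - D₂ v‖ ≤ C * l2 (u - v))
    (δD δE δA : ℝ)
    (hδD : ∀ z : Fin n → ℝ, ‖D₁ z - D₂ z‖ ≤ δD)
    (hδE : ∀ x ∈ M, ‖E₁ x - E₂ x‖ ≤ δE)
    (hδA : ∀ i j, |A₁ i j - A₂ i j| ≤ δA) :
    ∀ x ∈ M, ‖D₁ (A₁.mulVec (E₁ x)) - D₂ (A₂.mulVec (E₂ x))‖
      ≤ δD + C * ρ * Real.sqrt n * δE + C * (n : ℝ) ^ ((3 : ℝ) / 2) * Λ * δA := by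
  intro x hx
  rcases Nat.eq_zero_or_pos n with hn | hn
  · subst hn
    have hz : A₁.mulVec (E₁ x) = A₂.mulVec (E₂ x) := Subsingleton.elim _ _
    rw [hz]
    have h1 := hδD (A₂.mulVec (E₂ x))
    have hp : ((0:ℕ) : ℝ) ^ ((3:ℝ)/2) = 0 := by
      rw [Nat.cast_zero, Real.zero_rpow (by norm_num)]
    rw [hp]
    simp only [Nat.cast_zero, Real.sqrt_zero, mul_zero, zero_mul, add_zero]
    simpa using h1
  · have hδAnn : 0 ≤ δA := le_trans (abs_nonneg _) (hδA ⟨0, hn⟩ ⟨0, hn⟩)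
    set z₁ := A₁.mulVec (E₁ x) with hz₁
    set z₂ := A₂.mulVec (E₂ x) with hz₂
    have hsplit : z₁ - z₂ = A₁.mulVec (E₁ x - E₂ x) + (A₁ - A₂).mulVec (E₂ x) := by
      rw [Matrix.mulVec_sub, Matrix.sub_mulVec, hz₁, hz₂]
      abel
    have hterm1 : l2 (A₁.mulVec (E₁ x - E₂ x)) ≤ ρ * (Real.sqrt n * δE) :=
      calc l2 (A₁.mulVec (E₁ x - E₂ x)) ≤ specNorm A₁ * l2 (E₁ x - E₂ x) :=
            l2_mulVec_le_spec _ _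
        _ ≤ ρ * l2 (E₁ x - E₂ x) :=
            mul_le_mul_of_nonneg_right hA₁ (l2_nonneg _)
        _ ≤ ρ * (Real.sqrt n * δE) := by
            refine mul_le_mul_of_nonneg_left ?_ hρ
            calc l2 (E₁ x - E₂ x) ≤ Real.sqrt n * ‖E₁ x - E₂ x‖ := l2_le_sqrt_mul_norm _
              _ ≤ Real.sqrt n * δE :=
                  mul_le_mul_of_nonneg_left (hδE x hx) (Real.sqrt_nonneg _)
    have hsup : ‖(A₁ - A₂).mulVec (E₂ x)‖ ≤ (n : ℝ) * (δA * Λ) := by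
      refine (pi_norm_le_iff_of_nonneg (by positivity)).mpr fun i => ?_
      calc ‖(A₁ - A₂).mulVec (E₂ x) i‖ = |∑ j, (A₁ i j - A₂ i j) * E₂ x j| := by
            simp [Matrix.mulVec, dotProduct, Matrix.sub_apply]
        _ ≤ ∑ j, |(A₁ i j - A₂ i j) * E₂ x j| := Finset.abs_sum_le_sum_abs _ _
        _ ≤ ∑ _j : Fin n, δA * Λ := by
            refine Finset.sum_le_sum fun j _ => ?_
            rw [abs_mul]
            refine mul_le_mul (hδA i j) ?_ (abs_nonneg _) hδAnn
            exact le_trans (norm_le_pi_norm (E₂ x) j) (hE₂ x hx)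
        _ = (n : ℝ) * (δA * Λ) := by simp [mul_comm]
    have hterm2 : l2 ((A₁ - A₂).mulVec (E₂ x)) ≤ Real.sqrt n * ((n : ℝ) * (δA * Λ)) :=
      calc l2 ((A₁ - A₂).mulVec (E₂ x)) ≤ Real.sqrt n * ‖(A₁ - A₂).mulVec (E₂ x)‖ :=
            l2_le_sqrt_mul_norm _
        _ ≤ Real.sqrt n * ((n : ℝ) * (δA * Λ)) :=
            mul_le_mul_of_nonneg_left hsup (Real.sqrt_nonneg _)
    have key : l2 (z₁ - z₂) ≤ ρ * (Real.sqrt n * δE) + Real.sqrt n * ((n : ℝ) * (δA * Λ)) := by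
      rw [hsplit]
      exact le_trans (l2_add_le _ _) (add_le_add hterm1 hterm2)
    have hpow : ((n : ℝ)) ^ ((3 : ℝ) / 2) = Real.sqrt n * n := by
      rw [show (3:ℝ)/2 = 1/2 + 1 by norm_num,
        Real.rpow_add (by exact_mod_cast hn), Real.rpow_one, ← Real.sqrt_eq_rpow]
    have htri : ‖D₁ z₁ - D₂ z₂‖ ≤ ‖D₁ z₁ - D₂ z₁‖ + ‖D₂ z₁ - D₂ z₂‖ := by
      have : D₁ z₁ - D₂ z₂ = (D₁ z₁ - D₂ z₁) + (D₂ z₁ - D₂ z₂) := by abel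
      rw [this]; exact norm_add_le _ _
    calc ‖D₁ z₁ - D₂ z₂‖ ≤ ‖D₁ z₁ - D₂ z₁‖ + ‖D₂ z₁ - D₂ z₂‖ := htri
      _ ≤ δD + C * l2 (z₁ - z₂) := add_le_add (hδD z₁) (hD₂ z₁ z₂)
      _ ≤ δD + C * (ρ * (Real.sqrt n * δE) + Real.sqrt n * ((n : ℝ) * (δA * Λ))) :=
          add_le_add_right (mul_le_mul_of_nonneg_left key hC) δD
      _ = δD + C * ρ * Real.sqrt n * δE + C * (n : ℝ) ^ ((3 : ℝ) / 2) * Λ * δA := by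
          rw [hpow]; ring

end
end
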